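/- Let n, m ≥ 2 with m even, and let T be any deterministic decision tree computing g_{n,m}. Then for every function ℓ : [m] → [n], when the computation of T on the input x^ℓ reaches its output leaf (which is labeled 0, since x^ℓ is a 0-input), either at least m/2 of the cells queried along the way have value 0, or the total number of cells queried exceeds n(m−1) − 2m. -/

import Mathlib

open Classical
open scoped ENNReal

set_option maxHeartbeats 1000000

/-! ### Deterministic decision trees -/

inductive DTree (ι σ : Type) : Type
  | leaf (b : Bool) : DTree ι σ
  | node (v : ι) (child : σ → DTree ι σ) : DTree ι σ

namespace DTree

variable {ι σ : Type}

/-- The output of the decision tree on input `x`. -/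
def eval (x : ι → σ) : DTree ι σ → Bool
  | leaf b => b
  | node v child => (child (x v)).eval x

/-- The list of variables queried by the decision tree on input `x`,
in the order they are queried. -/
def queryList (x : ι → σ) : DTree ι σ → List ι
  | leaf _ => []
  | node v child => v :: (child (x v)).queryList x

/-- The cost of the decision tree on input `x`: the number of internal nodes visited. -/
def cost (T : DTree ι σ) (x : ι → σ) : ℕ := (T.queryList x).length

/-- `T` computes `f` if it outputs `f x` on every input `x`. -/
def Computes (T : DTree ι σ) (f : (ι → σ) → Bool) : Prop := ∀ x, T.eval x = f x

end DTree

/-- Deterministic query complexity. -/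
noncomputable def detComplexity {ι σ : Type} (f : (ι → σ) → Bool) : ℕ :=
  sInf {d : ℕ | ∃ T : DTree ι σ, T.Computes f ∧ ∀ x, T.cost x ≤ d}

/-- Expected cost of a randomized decision tree (a distribution over deterministic
decision trees) on input `x`. -/
noncomputable def expCost {ι σ : Type} (μ : PMF (DTree ι σ)) (x : ι → σ) : ℝ≥0∞ :=
  ∑' T : DTree ι σ, μ T * (T.cost x : ℝ≥0∞)

/-- Zero-error (Las Vegas) randomized query complexity. -/
noncomputable def R0query {ι σ : Type} (f : (ι → σ) → Bool) : ℝ≥0∞ :=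
  ⨅ μ ∈ {μ : PMF (DTree ι σ) | ∀ T ∈ μ.support, T.Computes f},
    ⨆ x : ι → σ, expCost μ x

/-- One-sided error randomized query complexity. -/
noncomputable def R1query {ι σ : Type} (f : (ι → σ) → Bool) : ℝ≥0∞ :=
  ⨅ μ ∈ {μ : PMF (DTree ι σ) |
      (∀ x, f x = false → ∀ T ∈ μ.support, T.eval x = false) ∧
      (∀ x, f x = true → 1 / 2 ≤ ∑' T : DTree ι σ, if T.eval x = true then μ T else 0)},
    ⨆ x : ι → σ, expCost μ x

/-- Bounded-error (Monte Carlo) randomized query complexity. -/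
noncomputable def Rquery {ι σ : Type} (f : (ι → σ) → Bool) : ℝ≥0∞ :=
  ⨅ μ ∈ {μ : PMF (DTree ι σ) |
      ∀ x, 9 / 10 ≤ ∑' T : DTree ι σ, if T.eval x = f x then μ T else 0},
    ⨆ x : ι → σ, expCost μ x
/-! ### Quantum query algorithms -/

/-- The standard quantum query oracle `O_x |j,p⟩|w⟩ = |j, p + x_j mod S⟩|w⟩`,
as a matrix. -/
noncomputable def qOracle {V ω : Type} [DecidableEq V] [DecidableEq ω] {S : ℕ}
    (x : V → Fin S) : Matrix (V × Fin S × ω) (V × Fin S × ω) ℂ :=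
  fun r c => if r = (c.1, c.2.1 + x c.1, c.2.2) then 1 else 0

/-- A quantum query algorithm on inputs `x : V → Fin S`, making `queries` queries, with
workspace `Fin (W+1)`, alternating the unitaries `U 0, …, U queries` with the oracle,
and measuring with the projector `P` at the end. -/
structure QAlg (V : Type) [Fintype V] [DecidableEq V] (S : ℕ) [NeZero S] where
  queries : ℕ
  W : ℕ
  init : V
  U : ℕ → Matrix (V × Fin S × Fin (W + 1)) (V × Fin S × Fin (W + 1)) ℂ
  hU : ∀ t, (U t).conjTranspose * U t = 1 ∧ U t * (U t).conjTranspose = 1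
  P : Matrix (V × Fin S × Fin (W + 1)) (V × Fin S × Fin (W + 1)) ℂ
  hP : P.conjTranspose = P ∧ P * P = P

namespace QAlg

variable {V : Type} [Fintype V] [DecidableEq V] {S : ℕ} [NeZero S]

/-- The state of the quantum algorithm after `t` steps on input `x`. -/
noncomputable def state (A : QAlg V S) (x : V → Fin S) :
    ℕ → (V × Fin S × Fin (A.W + 1) → ℂ)
  | 0 => (A.U 0).mulVec fun r => if r = (A.init, 0, 0) then 1 else 0
  | t + 1 => (A.U (t + 1)).mulVec ((qOracle x).mulVec (A.state x t))

/-- The probability that the algorithm accepts input `x`: `‖P |Ψ_x⟩‖²`. -/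
noncomputable def acceptProb (A : QAlg V S) (x : V → Fin S) : ℝ :=
  ∑ r : V × Fin S × Fin (A.W + 1), Complex.normSq (A.P.mulVec (A.state x A.queries) r)

end QAlg

/-- Bounded-error quantum query complexity (for functions over a finite input
alphabet `σ`, identified with `Fin (card σ)` via a fixed bijection). -/
noncomputable def Qquery {V σ : Type} [Fintype V] [DecidableEq V] [Fintype σ] [Nonempty σ]
    (f : (V → σ) → Bool) : ℕ :=
  letI : NeZero (Fintype.card σ) := ⟨Fintype.card_ne_zero⟩
  sInf {t : ℕ | ∃ A : QAlg V (Fintype.card σ), A.queries = t ∧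
    ∀ x : V → σ,
      (f x = true → 9 / 10 ≤ A.acceptProb fun j => Fintype.equivFin σ (x j)) ∧
      (f x = false → A.acceptProb (fun j => Fintype.equivFin σ (x j)) ≤ 1 / 10)}

/-- Exact quantum query complexity. -/
noncomputable def QEquery {V σ : Type} [Fintype V] [DecidableEq V] [Fintype σ] [Nonempty σ]
    (f : (V → σ) → Bool) : ℕ :=
  letI : NeZero (Fintype.card σ) := ⟨Fintype.card_ne_zero⟩
  sInf {t : ℕ | ∃ A : QAlg V (Fintype.card σ), A.queries = t ∧
    ∀ x : V → σ,
      (f x = true → A.acceptProb (fun j => Fintype.equivFin σ (x j)) = 1) ∧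
      (f x = false → A.acceptProb (fun j => Fintype.equivFin σ (x j)) = 0)}

/-- Approximate degree of a boolean function. -/
noncomputable def adeg {ι : Type} (F : (ι → Bool) → Bool) : ℕ :=
  sInf {d : ℕ | ∃ p : MvPolynomial ι ℝ, p.totalDegree ≤ d ∧
    ∀ y : ι → Bool, |MvPolynomial.eval (fun i => if y i then (1 : ℝ) else 0) p -
      (if F y then 1 else 0)| ≤ 1 / 10}
/-! ### The pointer functions of Göös–Pitassi–Watson type -/

/-- A symbol of the input alphabet: a boolean value, a left pointer, a right pointer,
and a back/internal pointer (to a cell or a column, depending on `β`). -/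
structure PSym (n m : ℕ) (β : Type) where
  val : Bool
  lp : Option (Fin n × Fin m)
  rp : Option (Fin n × Fin m)
  bp : Option β
deriving DecidableEq

/-- The all-ones symbol `(1,⊥,⊥,⊥)`. -/
def PSym.one (n m : ℕ) (β : Type) : PSym n m β := ⟨true, none, none, none⟩

/-- The symbol `(0,⊥,⊥,⊥)`. -/
def PSym.zero (n m : ℕ) (β : Type) : PSym n m β := ⟨false, none, none, none⟩

def PSym.equivProd (n m : ℕ) (β : Type) :
    PSym n m β ≃ Bool × Option (Fin n × Fin m) × Option (Fin n × Fin m) × Option β where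
  toFun v := (v.val, v.lp, v.rp, v.bp)
  invFun p := ⟨p.1, p.2.1, p.2.2.1, p.2.2.2⟩
  left_inv _ := rfl
  right_inv _ := rfl

instance {n m : ℕ} {β : Type} [Fintype β] : Fintype (PSym n m β) :=
  Fintype.ofEquiv _ (PSym.equivProd n m β).symm

instance {n m : ℕ} {β : Type} : Nonempty (PSym n m β) := ⟨PSym.one n m β⟩

/-- The sequence of k bits of `j`, most significant first:  the root-to-leaf path
(`false` = left, `true` = right) of the `j`-th leaf in the complete binary tree of depth `k`. -/
def bitsPath (k j : ℕ) : List Bool :=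
  ((List.range k).reverse).map fun i => j.testBit i

/-- The root-to-leaf path of the leaf labeled `j` (0-indexed) in the balanced binary tree
with `m` leaves: the complete binary tree if `m` is a power of 2, and otherwise the complete
binary tree on `2 ^ ⌊log₂ m⌋` leaves with a pair of children added to each of the
`m - 2 ^ ⌊log₂ m⌋` leftmost leaves. -/
def treePath (m j : ℕ) : List Bool :=
  if m - 2 ^ Nat.log 2 m = 0 then bitsPath (Nat.log 2 m) j
  else if j < 2 * (m - 2 ^ Nat.log 2 m) then
    bitsPath (Nat.log 2 m) (j / 2) ++ [j % 2 == 1]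
  else bitsPath (Nat.log 2 m) (j - (m - 2 ^ Nat.log 2 m))

/-- Starting at cell `a` and following the left/right pointers of `x` as prescribed by the
list `p` of moves (`false` = left pointer, `true` = right pointer); returns `none` if a
null pointer is encountered. -/
def followPath {n m : ℕ} {β : Type} (x : Fin n × Fin m → PSym n m β)
    (a : Fin n × Fin m) (p : List Bool) : Option (Fin n × Fin m) :=
  p.foldl (fun acc b => acc.bind fun c => if b then (x c).rp else (x c).lp) (some a)

/-- The conditions for `x` to be a 1-input of `f_{n,m}`, with marked column `b` and special
element `a`: (1) `b` is the unique all-1 column; (2) `a` is the unique cell of column `b`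
with `x_a ≠ (1,⊥,⊥,⊥)`; (3) for every column `j ≠ b` the tree path from `a` to the leaf
labeled `j` exists, and ends at a cell `ℓ_j` of column `j` holding a 0; (4) the back pointer
of each `ℓ_j` points to the column `b`. -/
def fCond (n m : ℕ) (x : Fin n × Fin m → PSym n m (Fin m))
    (b : Fin m) (a : Fin n × Fin m) : Prop :=
  (∀ j : Fin m, (∀ i : Fin n, (x (i, j)).val = true) ↔ j = b) ∧
  a.2 = b ∧
  (∀ i : Fin n, x (i, b) ≠ PSym.one n m (Fin m) ↔ (i, b) = a) ∧
  ∀ j : Fin m, j ≠ b →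
    ∃ ℓ : Fin n × Fin m, followPath x a (treePath m j.1) = some ℓ ∧
      ℓ.2 = j ∧ (x ℓ).val = false ∧ (x ℓ).bp = some b

/-- The pointer function `f_{n,m}`, with back pointers to the marked column. -/
noncomputable def fFun (n m : ℕ) (x : Fin n × Fin m → PSym n m (Fin m)) : Bool :=
  if ∃ b a, fCond n m x b a then true else false

/-- The conditions for `x` to be a 1-input of `g_{n,m}`, with marked column `b` and special
element `a`: (1)–(3) as for `f_{n,m}`, and (4′) the set of columns `j ≠ b` whose highlighted
zero `ℓ_j` has back pointer to `a` has size exactly `m/2`. -/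
def gCond (n m : ℕ) (x : Fin n × Fin m → PSym n m (Fin n × Fin m))
    (b : Fin m) (a : Fin n × Fin m) : Prop :=
  (∀ j : Fin m, (∀ i : Fin n, (x (i, j)).val = true) ↔ j = b) ∧
  a.2 = b ∧
  (∀ i : Fin n, x (i, b) ≠ PSym.one n m (Fin n × Fin m) ↔ (i, b) = a) ∧
  (∀ j : Fin m, j ≠ b →
    ∃ ℓ : Fin n × Fin m, followPath x a (treePath m j.1) = some ℓ ∧
      ℓ.2 = j ∧ (x ℓ).val = false) ∧
  {j : Fin m | j ≠ b ∧ ∃ ℓ : Fin n × Fin m,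
      followPath x a (treePath m j.1) = some ℓ ∧ (x ℓ).bp = some a}.ncard = m / 2

/-- The pointer function `g_{n,m}`, where exactly `m/2` of the highlighted zeroes point
back to the special element. -/
noncomputable def gFun (n m : ℕ) (x : Fin n × Fin m → PSym n m (Fin n × Fin m)) : Bool :=
  if ∃ b a, gCond n m x b a then true else false

/-- Column `j` is good in `x` (for `g_{n,m}`): `x` is a 1-input with marked column `b ≠ j`
and special element `a`, and the highlighted zero of column `j` points back to `a`. -/
def goodColumn (n m : ℕ) (x : Fin n × Fin m → PSym n m (Fin n × Fin m)) (j : Fin m) : Prop :=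
  ∃ b a, gCond n m x b a ∧ j ≠ b ∧
    ∃ ℓ : Fin n × Fin m, followPath x a (treePath m j.1) = some ℓ ∧ (x ℓ).bp = some a

/-- The conditions for `x` to be a 1-input of `h_{k,n,m}`, with marked columns `b 0,…,b (k-1)`
and special elements `a 0,…,a (k-1)`: (1) the `b s` are exactly the all-1 columns; (2) `a s` is
the unique cell of column `b s` with `x_{a s} ≠ (1,⊥,⊥,⊥)`; (3) the internal pointers of the
`a s` form a cycle and all the `a s` have equal left pointers and equal right pointers;
(4) for every non-marked column `j` the tree path from any `a s` to the leaf labeled `j`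
exists and ends at a cell `ℓ_j` of column `j` holding a 0. -/
def hCond (k n m : ℕ) (x : Fin n × Fin m → PSym n m (Fin n × Fin m))
    (b : Fin k → Fin m) (a : Fin k → Fin n × Fin m) : Prop :=
  Function.Injective b ∧
  (∀ j : Fin m, (∀ i : Fin n, (x (i, j)).val = true) ↔ ∃ s, b s = j) ∧
  (∀ s, (a s).2 = b s) ∧
  (∀ s, ∀ i : Fin n, x (i, b s) ≠ PSym.one n m (Fin n × Fin m) ↔ (i, b s) = a s) ∧
  (∀ s : Fin k, (x (a s)).bp = some (a ⟨(s.1 + 1) % k, Nat.mod_lt _ s.pos⟩)) ∧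
  (∀ s t : Fin k, (x (a s)).lp = (x (a t)).lp ∧ (x (a s)).rp = (x (a t)).rp) ∧
  ∀ j : Fin m, (∀ s, b s ≠ j) → ∀ s : Fin k,
    ∃ ℓ : Fin n × Fin m, followPath x (a s) (treePath m j.1) = some ℓ ∧
      ℓ.2 = j ∧ (x ℓ).val = false

/-- The pointer function `h_{k,n,m}` with `k` marked columns and no back pointers. -/
noncomputable def hFun (k n m : ℕ) (x : Fin n × Fin m → PSym n m (Fin n × Fin m)) : Bool :=
  if ∃ b a, hCond k n m x b a then true else false

/-- The hard input `x^ℓ`: cell `(i,j)` holds `(0,⊥,⊥,⊥)` if `i = ℓ j` and `(1,⊥,⊥,⊥)`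
otherwise. -/
def xhard (n m : ℕ) (β : Type) (ℓ : Fin m → Fin n) : Fin n × Fin m → PSym n m β :=
  fun c => if c.1 = ℓ c.2 then PSym.zero n m β else PSym.one n m β

/-- The set of (distinct) cells queried among the first `t` queries of `T` on input `x`. -/
def queriedUpTo {ι σ : Type} [DecidableEq ι] (T : DTree ι σ) (x : ι → σ) (t : ℕ) :
    Finset ι :=
  ((T.queryList x).take t).toFinset
/-! ### The progress measure for the hard distribution `x^ℓ` -/

/-- Column `j` is compromised (for the input `x^ℓ`), given the set `Q` of queried cells:
the zero cell `(ℓ j, j)` has been queried, or more than `n/2` cells of column `j` have been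
queried. -/
def compromisedCol (n m : ℕ) (ℓ : Fin m → Fin n) (Q : Finset (Fin n × Fin m))
    (j : Fin m) : Prop :=
  (ℓ j, j) ∈ Q ∨ n < 2 * (Q.filter fun c => c.2 = j).card

/-- The progress measure `I_t = A_t + (2/n)·B_t` of the decision tree `T` on the input `x^ℓ`
after `t` queries, where `A_t` is the number of compromised columns and `B_t` is the number
of queried cells lying outside compromised columns. -/
noncomputable def Imeasure (n m : ℕ)
    (T : DTree (Fin n × Fin m) (PSym n m (Fin n × Fin m))) (ℓ : Fin m → Fin n) (t : ℕ) : ℝ :=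
  ({j : Fin m |
      compromisedCol n m ℓ (queriedUpTo T (xhard n m (Fin n × Fin m) ℓ) t) j}.ncard : ℝ) +
    (2 / n) * ({c : Fin n × Fin m | c ∈ queriedUpTo T (xhard n m (Fin n × Fin m) ℓ) t ∧
      ¬ compromisedCol n m ℓ (queriedUpTo T (xhard n m (Fin n × Fin m) ℓ) t) c.2}.ncard : ℝ)
/-! ### The balanced binary tree, via root-to-node paths -/

/-- The node set of the balanced binary tree with `m` leaves: each node is identified with
the left/right path from the root to it, so the nodes are exactly the prefixes of the
root-to-leaf paths. -/
def treeNodes (m : ℕ) : Finset (List Bool) :=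
  (Finset.range m).biUnion fun j => (treePath m j).inits.toFinset

/-- The leaves of the balanced binary tree with `m` leaves. -/
def leafNodes (m : ℕ) : Finset (List Bool) :=
  (Finset.range m).image fun j => treePath m j

/-- The internal nodes of the balanced binary tree with `m` leaves. -/
def internalNodes (m : ℕ) : Finset (List Bool) :=
  treeNodes m \ leafNodes m

/-- The subtree rooted at a node `u`: all nodes of which `u` is a prefix. -/
def subtreeOf (m : ℕ) (u : List Bool) : Finset (List Bool) :=
  (treeNodes m).filter fun w => u <+: w

/-! ### The hard distribution for `h_{1,n,m}` -/

/-- A parameter quadruple `(v, π, ℓᴸ, ℓᴺ)` for the hard distribution: a bit `v`, a map `π`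
from internal tree nodes to columns, and row maps `ℓᴸ, ℓᴺ` for leaves resp. internal nodes. -/
abbrev HardQ (n m : ℕ) : Type :=
  Bool × ({u : List Bool // u ∈ internalNodes m} → Fin m) × (Fin m → Fin n) × (Fin m → Fin n)

/-- The valid parameter quadruples: `π` injective and `ℓᴸ j ≠ ℓᴺ j` for all `j`. -/
noncomputable def hardSet (n m : ℕ) : Finset (HardQ n m) :=
  Finset.univ.filter fun q => Function.Injective q.2.1 ∧ ∀ j, q.2.2.1 j ≠ q.2.2.2 j

/-- The column of the root of the tree (`none` if the tree has no internal node). -/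
noncomputable def rootCol (n m : ℕ) (q : HardQ n m) : Option (Fin m) :=
  if h : ([] : List Bool) ∈ internalNodes m then some (q.2.1 ⟨[], h⟩) else none

/-- The cell where a child node `w` of an internal node is placed: internal nodes go to
cell `(ℓᴺ (π w), π w)`, the leaf labeled `j` goes to cell `(ℓᴸ j, j)`, and the removed leaf
(the one labeled by the root's column) yields a null pointer. -/
noncomputable def childCell (n m : ℕ) (q : HardQ n m) (w : List Bool) :
    Option (Fin n × Fin m) :=
  if h : w ∈ internalNodes m then some (q.2.2.2 (q.2.1 ⟨w, h⟩), q.2.1 ⟨w, h⟩)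
  else if h2 : ∃ j : Fin m, w = treePath m j.1 ∧ some j ≠ rootCol n m q then
    some (q.2.2.1 (Classical.choose h2), Classical.choose h2)
  else none

/-- The input of the hard distribution determined by the parameter quadruple `q`:
the internal node `u` of the tree is placed at cell `(ℓᴺ (π u), π u)` with left and right
pointers to the cells of its children, value `v` and a self-loop internal pointer if `u` is
the root, and value 0 otherwise; for `j ≠ π(root)`, the leaf labeled `j` is placed at cell
`(ℓᴸ j, j)` with value 0 and null pointers; all the remaining cells hold `(1,⊥,⊥,⊥)`. -/
noncomputable def hardInput (n m : ℕ) (q : HardQ n m) :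
    Fin n × Fin m → PSym n m (Fin n × Fin m) :=
  fun c =>
    if h : ∃ u : {u : List Bool // u ∈ internalNodes m}, q.2.1 u = c.2 ∧ q.2.2.2 c.2 = c.1 then
      { val := if (Classical.choose h).1 = [] then q.1 else false
        lp := childCell n m q ((Classical.choose h).1 ++ [false])
        rp := childCell n m q ((Classical.choose h).1 ++ [true])
        bp := if (Classical.choose h).1 = [] then some c else none }
    else if some c.2 ≠ rootCol n m q ∧ c.1 = q.2.2.1 c.2 then PSym.zero n m (Fin n × Fin m)
    else PSym.one n m (Fin n × Fin m)

/-- Column `j` directly satisfies (i) or (ii): one of the cells `(ℓᴸ j, j)`, `(ℓᴺ j, j)` has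
been queried, or more than half of the cells of column `j` have been queried. -/
def colBad (n m : ℕ) (q : HardQ n m) (Q : Finset (Fin n × Fin m)) (j : Fin m) : Prop :=
  (q.2.2.1 j, j) ∈ Q ∨ (q.2.2.2 j, j) ∈ Q ∨ n < 2 * (Q.filter fun c => c.2 = j).card

/-- Column `j` is compromised: it satisfies (i) or (ii), or some ancestor `u` of `π⁻¹(j)`
in the tree is such that column `π u` satisfies (i) or (ii). -/
def compromisedCol19 (n m : ℕ) (q : HardQ n m) (Q : Finset (Fin n × Fin m))
    (j : Fin m) : Prop :=
  colBad n m q Q j ∨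
  ∃ w u : {u : List Bool // u ∈ internalNodes m}, q.2.1 w = j ∧
    u.1 <+: w.1 ∧ u.1 ≠ w.1 ∧ colBad n m q Q (q.2.1 u)

/-- The progress measure `I_t = min{A_t + (4·C0·log₂ m / n)·B_t, m/2}` of the decision tree
`D` on the hard-distribution input given by `q` after `t` queries, where `A_t` is the number
of compromised columns and `B_t` the number of queried cells outside compromised columns. -/
noncomputable def Imeasure19 (n m : ℕ) (C0 : ℝ)
    (D : DTree (Fin n × Fin m) (PSym n m (Fin n × Fin m))) (q : HardQ n m) (t : ℕ) : ℝ :=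
  min
    (({j : Fin m | compromisedCol19 n m q (queriedUpTo D (hardInput n m q) t) j}.ncard : ℝ) +
      (4 * C0 * Real.logb 2 m / n) *
        ({c : Fin n × Fin m | c ∈ queriedUpTo D (hardInput n m q) t ∧
          ¬ compromisedCol19 n m q (queriedUpTo D (hardInput n m q) t) c.2}.ncard : ℝ))
    (m / 2)
/-! ### Auxiliary lemmas for Statement 5 -/

section Aux5

/-- Heap index of a node of the binary tree. -/
def hidx (l : List Bool) : ℕ := l.foldl (fun a b => 2 * a + cond b 1 0) 1

lemma hidx_concat (l : List Bool) (b : Bool) :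
    hidx (l ++ [b]) = 2 * hidx l + cond b 1 0 := by
  simp [hidx, List.foldl_append]

lemma hidx_bounds (l : List Bool) : 2 ^ l.length ≤ hidx l ∧ hidx l < 2 ^ (l.length + 1) := by
  induction l using List.reverseRecOn with
  | nil => simp [hidx]
  | append_singleton l b ih =>
      rcases ih with ⟨h1, h2⟩
      rw [hidx_concat]
      constructor
      · simp only [List.length_append, List.length_singleton]
        cases b <;> simp <;> · rw [pow_succ]; omega
      · simp only [List.length_append, List.length_singleton]
        cases b <;> simp <;> · rw [pow_succ, pow_succ]; omega

lemma hidx_injective : Function.Injective hidx := by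
  intro l1
  induction l1 using List.reverseRecOn with
  | nil =>
      intro l2 h
      rcases l2.eq_nil_or_concat with rfl | ⟨l', b', rfl⟩
      · rfl
      · rw [List.concat_eq_append, hidx_concat] at h
        have h1 : 1 ≤ hidx l' := le_trans (Nat.one_le_two_pow) (hidx_bounds l').1
        have h0 : hidx ([] : List Bool) = 1 := rfl
        rw [h0] at h
        exfalso
        cases b' <;> simp at h <;> omega
  | append_singleton l b ih =>
      intro l2 h
      rcases l2.eq_nil_or_concat with rfl | ⟨l', b', rfl⟩
      · rw [hidx_concat] at h
        have h1 : 1 ≤ hidx l := le_trans (Nat.one_le_two_pow) (hidx_bounds l).1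
        have h0 : hidx ([] : List Bool) = 1 := rfl
        rw [h0] at h
        exfalso
        cases b <;> simp at h <;> omega
      · rw [List.concat_eq_append, hidx_concat, hidx_concat] at h
        have hb : b = b' ∧ hidx l = hidx l' := by
          cases b <;> cases b' <;> simp at h ⊢ <;> omega
        rw [List.concat_eq_append, hb.1, ih hb.2]

lemma bitsPath_succ (k j : ℕ) : bitsPath (k + 1) j = j.testBit k :: bitsPath k j := by
  simp [bitsPath, List.range_succ]

@[simp] lemma bitsPath_length (k j : ℕ) : (bitsPath k j).length = k := by
  simp [bitsPath]

lemma foldl_bitsPath (k j a : ℕ) :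
    (bitsPath k j).foldl (fun a b => 2 * a + cond b 1 0) a = a * 2 ^ k + j % 2 ^ k := by
  induction k generalizing a with
  | zero => simp [bitsPath, Nat.mod_one]
  | succ k ih =>
      rw [bitsPath_succ]
      rw [List.foldl_cons, ih]
      have ht : Nat.testBit j k = decide (j / 2 ^ k % 2 = 1) := Nat.testBit_eq_decide_div_mod_eq
      have hmod : j % 2 ^ (k + 1) = j % 2 ^ k + 2 ^ k * (j / 2 ^ k % 2) := by
        rw [pow_succ, Nat.mod_mul]
      have h2 : j / 2 ^ k % 2 = 0 ∨ j / 2 ^ k % 2 = 1 := by omega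
      rcases h2 with h2 | h2 <;>
        · rw [h2] at hmod ht
          rw [ht, hmod]
          simp [pow_succ]
          ring

lemma hidx_bitsPath (k j : ℕ) (hj : j < 2 ^ k) : hidx (bitsPath k j) = 2 ^ k + j := by
  rw [hidx, foldl_bitsPath, one_mul, Nat.mod_eq_of_lt hj]

lemma bitsPath_inj {k i j : ℕ} (hi : i < 2 ^ k) (hj : j < 2 ^ k)
    (h : bitsPath k i = bitsPath k j) : i = j := by
  have h1 := hidx_bitsPath k i hi
  rw [h, hidx_bitsPath k j hj] at h1
  omega

lemma log_facts {m : ℕ} (hm : 2 ≤ m) :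
    2 ^ Nat.log 2 m ≤ m ∧ m < 2 ^ (Nat.log 2 m + 1) ∧ 1 ≤ Nat.log 2 m := by
  have h1 : 2 ^ Nat.log 2 m ≤ m := Nat.pow_log_le_self 2 (by omega)
  have h2 : m < 2 ^ (Nat.log 2 m + 1) := Nat.lt_pow_succ_log_self (by norm_num) m
  refine ⟨h1, h2, ?_⟩
  by_contra h
  have : Nat.log 2 m = 0 := by omega
  rw [this] at h2
  norm_num at h2
  omega

section TreeFacts

variable {m : ℕ} (hm : 2 ≤ m)

include hm in
lemma treePath_ne_nil {j : ℕ} : treePath m j ≠ [] := by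
  obtain ⟨h1, h2, h3⟩ := log_facts hm
  intro h
  have hl := congrArg List.length h
  unfold treePath at hl
  split_ifs at hl <;> simp at hl <;> omega

include hm in
lemma treePath_prefix_eq {j1 j2 : ℕ} (h1 : j1 < m) (h2 : j2 < m)
    (hp : treePath m j1 <+: treePath m j2) : j1 = j2 := by
  obtain ⟨hKm, hm2, hK1⟩ := log_facts hm
  unfold treePath at hp
  set K := Nat.log 2 m with hK
  by_cases hr : m - 2 ^ K = 0
  · rw [if_pos hr, if_pos hr] at hp
    have he : bitsPath K j1 = bitsPath K j2 := hp.eq_of_length (by simp)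
    exact bitsPath_inj (by omega) (by omega) he
  · rw [if_neg hr, if_neg hr] at hp
    have hrK : m - 2 ^ K < 2 ^ K := by omega
    split_ifs at hp with hj1 hj2 hj2
    · have he := hp.eq_of_length (by simp)
      have hlen : (bitsPath K (j1 / 2)).length = (bitsPath K (j2 / 2)).length := by simp
      obtain ⟨ha, hb⟩ := List.append_inj he hlen
      have hq : j1 / 2 = j2 / 2 := bitsPath_inj (by omega) (by omega) ha
      have hbit : (j1 % 2 == 1) = (j2 % 2 == 1) := by
        simpa using hb
      have hbit2 : j1 % 2 = j2 % 2 := by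
        have hm1 : j1 % 2 = 0 ∨ j1 % 2 = 1 := by omega
        have hm2' : j2 % 2 = 0 ∨ j2 % 2 = 1 := by omega
        rcases hm1 with hm1 | hm1 <;> rcases hm2' with hm2' | hm2' <;>
          rw [hm1, hm2'] at hbit <;> first | omega | (exfalso; simp at hbit)
      omega
    · exfalso
      have := hp.length_le
      simp only [List.length_append, bitsPath_length, List.length_singleton] at this
      omega
    · obtain ⟨t, ht⟩ := hp
      have hlt : t.length = 1 := by
        have := congrArg List.length ht
        simp at this
        omega
      obtain ⟨x, hx⟩ := List.length_eq_one_iff.mp hlt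
      subst hx
      obtain ⟨ha, hb⟩ := List.append_inj ht (by simp)
      have := bitsPath_inj (by omega) (by omega) ha
      omega
    · have he : bitsPath K (j1 - (m - 2 ^ K)) = bitsPath K (j2 - (m - 2 ^ K)) :=
        hp.eq_of_length (by simp)
      have := bitsPath_inj (by omega) (by omega) he
      omega

include hm in
lemma proper_prefix_internal {u : List Bool} {j : ℕ} (hj : j < m)
    (hp : u <+: treePath m j) (hne : u ≠ treePath m j) : u ∈ internalNodes m := by
  rw [internalNodes, Finset.mem_sdiff]
  constructor
  · rw [treeNodes, Finset.mem_biUnion]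
    exact ⟨j, Finset.mem_range.mpr hj, List.mem_toFinset.mpr ((List.mem_inits _ _).mpr hp)⟩
  · intro hleaf
    rw [leafNodes, Finset.mem_image] at hleaf
    obtain ⟨j', hj', hj'e⟩ := hleaf
    rw [Finset.mem_range] at hj'
    subst hj'e
    exact hne (by rw [treePath_prefix_eq hm hj' hj hp])

include hm in
lemma internal_hidx_mem {u : List Bool} (hu : u ∈ internalNodes m) :
    hidx u ∈ Finset.Ico 1 m := by
  obtain ⟨hKm, hm2, hK1⟩ := log_facts hm
  rw [internalNodes, Finset.mem_sdiff] at hu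
  obtain ⟨htree, hleaf⟩ := hu
  rw [treeNodes, Finset.mem_biUnion] at htree
  obtain ⟨j, hj, hmem⟩ := htree
  rw [Finset.mem_range] at hj
  rw [List.mem_toFinset] at hmem
  rw [List.mem_inits] at hmem
  have hnl : ∀ j' < m, u ≠ treePath m j' := by
    intro j' hj' he
    exact hleaf (by rw [leafNodes, Finset.mem_image]; exact ⟨j', Finset.mem_range.mpr hj', he.symm⟩)
  have hlow : 1 ≤ hidx u := le_trans Nat.one_le_two_pow (hidx_bounds u).1
  rw [Finset.mem_Ico]
  refine ⟨hlow, ?_⟩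
  have hsmall : u.length < Nat.log 2 m → hidx u < m := by
    intro hlt
    have := (hidx_bounds u).2
    have h2 : 2 ^ (u.length + 1) ≤ 2 ^ Nat.log 2 m := Nat.pow_le_pow_right (by norm_num) (by omega)
    omega
  unfold treePath at hmem
  set K := Nat.log 2 m with hK
  by_cases hr : m - 2 ^ K = 0
  · rw [if_pos hr] at hmem
    have hlenle := hmem.length_le
    simp only [bitsPath_length] at hlenle
    rcases Nat.lt_or_ge u.length K with hlt | hge
    · exact hsmall hlt
    · exfalso
      refine hnl j hj ?_
      unfold treePath
      rw [← hK, if_pos hr]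
      exact hmem.eq_of_length (by simp; omega)
  · rw [if_neg hr] at hmem
    have hrK : m - 2 ^ K < 2 ^ K := by omega
    split_ifs at hmem with hj2 <;> have hlenle := hmem.length_le
    · simp only [List.length_append, bitsPath_length, List.length_singleton] at hlenle
      rcases Nat.lt_or_ge u.length K with hlt | hge
      rotate_left
      rcases Nat.eq_or_lt_of_le hlenle with heq | hlt2
      · exfalso
        refine hnl j hj ?_
        unfold treePath
        rw [← hK, if_neg hr, if_pos hj2]
        exact hmem.eq_of_length (by simp; omega)
      · have hlen : u.length = K := by omega
        have he : u = bitsPath K (j / 2) := by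
          obtain ⟨t, ht⟩ := hmem
          have hlt : t.length = 1 := by
            have := congrArg List.length ht
            simp at this
            omega
          obtain ⟨x, hx⟩ := List.length_eq_one_iff.mp hlt
          subst hx
          exact (List.append_inj ht (by simp; omega)).1
        rw [he, hidx_bitsPath K (j / 2) (by omega)]
        omega
      · exact hsmall hlt
    · simp only [bitsPath_length] at hlenle
      rcases Nat.lt_or_ge u.length K with hlt | hge
      · exact hsmall hlt
      · exfalso
        refine hnl j hj ?_
        unfold treePath
        rw [← hK, if_neg hr, if_neg hj2]
        exact hmem.eq_of_length (by simp; omega)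

include hm in
lemma internal_card_le : (internalNodes m).card ≤ m - 1 := by
  have h := Finset.card_le_card_of_injOn hidx (fun u hu => internal_hidx_mem hm hu)
    (hidx_injective.injOn)
  simpa using h

lemma mem_treeNodes_iff {u : List Bool} :
    u ∈ treeNodes m ↔ ∃ j < m, u <+: treePath m j := by
  simp [treeNodes, List.mem_inits]

include hm in
lemma concat_mem_internal {u : List Bool} {d : Bool} (h : u ++ [d] ∈ treeNodes m) :
    u ∈ internalNodes m := by
  rw [mem_treeNodes_iff] at h
  obtain ⟨j, hj, hp⟩ := h
  have hp' : u <+: treePath m j := (List.prefix_append u [d]).trans hp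
  refine proper_prefix_internal hm hj hp' ?_
  intro he
  have h1 := hp.length_le
  rw [← he] at h1
  simp at h1

lemma internal_mem_treeNodes {u : List Bool} (h : u ∈ internalNodes m) : u ∈ treeNodes m :=
  (Finset.mem_sdiff.mp h).1

include hm in
lemma treePath_not_internal {j : ℕ} (hj : j < m) : treePath m j ∉ internalNodes m := by
  intro h
  exact (Finset.mem_sdiff.mp h).2
    (by rw [leafNodes, Finset.mem_image]; exact ⟨j, Finset.mem_range.mpr hj, rfl⟩)

end TreeFacts

/-- If two inputs agree on all cells queried on input `x`, the tree evaluates equally. -/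
lemma dtree_eval_eq_of_agree {ι σ : Type} (T : DTree ι σ) (x y : ι → σ)
    (h : ∀ v ∈ T.queryList x, y v = x v) : T.eval y = T.eval x := by
  induction T with
  | leaf b => rfl
  | node v child ih =>
      have hv : y v = x v := h v (by simp [DTree.queryList])
      show (child (y v)).eval y = (child (x v)).eval x
      rw [hv]
      exact ih (x v) (fun w hw => h w (by simp [DTree.queryList]; exact Or.inr hw))

lemma followPath_concat {n m : ℕ} {β : Type} (x : Fin n × Fin m → PSym n m β)
    (a : Fin n × Fin m) (p : List Bool) (d : Bool) :
    followPath x a (p ++ [d]) =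
      (followPath x a p).bind (fun c => if d then (x c).rp else (x c).lp) := by
  simp [followPath, List.foldl_append]

section Construction

variable (n m : ℕ) (ℓ : Fin m → Fin n) (b : Fin m)
  (φ : {u : List Bool // u ∈ (internalNodes m).erase ([] : List Bool)} → Fin n × Fin m)
  (S : Finset (Fin m))

/-- The cell at which the tree node `w` is placed. -/
noncomputable def cellOfW (w : List Bool) : Option (Fin n × Fin m) :=
  if h : w ∈ (internalNodes m).erase ([] : List Bool) then some (φ ⟨w, h⟩)
  else if w = [] then some (ℓ b, b)
  else if h2 : ∃ j : Fin m, treePath m j.1 = w then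
    some (ℓ (Classical.choose h2), Classical.choose h2)
  else none

/-- The modified 1-input. -/
noncomputable def yInp : Fin n × Fin m → PSym n m (Fin n × Fin m) := fun c =>
  if c = (ℓ b, b) then
    ⟨true, cellOfW n m ℓ b φ [false], cellOfW n m ℓ b φ [true], some (ℓ b, b)⟩
  else if h : ∃ u, φ u = c then
    ⟨false, cellOfW n m ℓ b φ ((Classical.choose h).1 ++ [false]),
      cellOfW n m ℓ b φ ((Classical.choose h).1 ++ [true]), none⟩
  else if c = (ℓ c.2, c.2) then
    ⟨false, none, none, if c.2 ∈ S then some (ℓ b, b) else none⟩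
  else PSym.one n m (Fin n × Fin m)

variable {n m ℓ b φ S}
variable (hm : 2 ≤ m) (hφinj : Function.Injective φ)
  (hφcol : ∀ u, (φ u).2 ≠ b) (hφleaf : ∀ u (j : Fin m), φ u ≠ (ℓ j, j))

lemma cellOfW_nil : cellOfW n m ℓ b φ [] = some (ℓ b, b) := by
  unfold cellOfW
  rw [dif_neg (Finset.notMem_erase _ _), if_pos rfl]

lemma cellOfW_int {w : List Bool} (hw : w ∈ internalNodes m) (hne : w ≠ []) :
    cellOfW n m ℓ b φ w = some (φ ⟨w, Finset.mem_erase.mpr ⟨hne, hw⟩⟩) := by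
  unfold cellOfW
  rw [dif_pos (Finset.mem_erase.mpr ⟨hne, hw⟩)]

include hm in
lemma cellOfW_leaf (j : Fin m) : cellOfW n m ℓ b φ (treePath m j.1) = some (ℓ j, j) := by
  unfold cellOfW
  have hni : treePath m j.1 ∉ (internalNodes m).erase ([] : List Bool) := by
    intro h
    exact treePath_not_internal hm j.isLt (Finset.mem_of_mem_erase h)
  have h2 : ∃ j' : Fin m, treePath m j'.1 = treePath m j.1 := ⟨j, rfl⟩
  rw [dif_neg hni, if_neg (treePath_ne_nil hm), dif_pos h2]
  have hspec := Classical.choose_spec h2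
  have : Classical.choose h2 = j := by
    apply Fin.ext
    exact treePath_prefix_eq hm (Classical.choose h2).isLt j.isLt (by rw [hspec])
  rw [this]

lemma yInp_root :
    yInp n m ℓ b φ S (ℓ b, b) =
      ⟨true, cellOfW n m ℓ b φ [false], cellOfW n m ℓ b φ [true], some (ℓ b, b)⟩ := by
  unfold yInp
  rw [if_pos rfl]

include hφinj hφcol in
lemma yInp_int (u : {u : List Bool // u ∈ (internalNodes m).erase ([] : List Bool)}) :
    yInp n m ℓ b φ S (φ u) =
      ⟨false, cellOfW n m ℓ b φ (u.1 ++ [false]), cellOfW n m ℓ b φ (u.1 ++ [true]), none⟩ := by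
  unfold yInp
  rw [if_neg (by intro he; exact hφcol u (by rw [he]))]
  have hx : ∃ u', φ u' = φ u := ⟨u, rfl⟩
  rw [dif_pos hx]
  have : Classical.choose hx = u := hφinj (Classical.choose_spec hx)
  rw [this]

include hφleaf in
lemma yInp_leaf (j : Fin m) (hj : j ≠ b) :
    yInp n m ℓ b φ S (ℓ j, j) =
      ⟨false, none, none, if j ∈ S then some (ℓ b, b) else none⟩ := by
  unfold yInp
  rw [if_neg (by intro he; exact hj (congrArg Prod.snd he))]
  rw [dif_neg (by rintro ⟨u, hu⟩; exact hφleaf u j hu)]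
  rw [if_pos rfl]

lemma yInp_other (c : Fin n × Fin m) (hca : c ≠ (ℓ b, b)) (hcφ : ¬∃ u, φ u = c)
    (hcz : c.1 ≠ ℓ c.2) : yInp n m ℓ b φ S c = PSym.one n m (Fin n × Fin m) := by
  unfold yInp
  rw [if_neg hca, dif_neg hcφ,
    if_neg (by intro he; exact hcz (congrArg Prod.fst he))]

include hm hφinj hφcol in
lemma follow_yInp {w : List Bool} (hw : w ∈ treeNodes m) :
    followPath (yInp n m ℓ b φ S) (ℓ b, b) w = cellOfW n m ℓ b φ w := by
  induction w using List.reverseRecOn with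
  | nil => rw [cellOfW_nil]; rfl
  | append_singleton u d ih =>
      have hu : u ∈ internalNodes m := concat_mem_internal hm hw
      rw [followPath_concat, ih (internal_mem_treeNodes hu)]
      by_cases hnil : u = []
      · subst hnil
        rw [cellOfW_nil, Option.bind_some, yInp_root]
        cases d <;> simp
      · rw [cellOfW_int hu hnil, Option.bind_some, yInp_int hφinj hφcol]
        cases d <;> simp

include hm hφinj hφcol in
lemma follow_yInp_leaf (j : Fin m) :
    followPath (yInp n m ℓ b φ S) (ℓ b, b) (treePath m j.1) = some (ℓ j, j) := by
  rw [follow_yInp hm hφinj hφcol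
    (mem_treeNodes_iff.mpr ⟨j.1, j.isLt, List.prefix_refl _⟩), cellOfW_leaf hm]

include hm hφinj hφcol hφleaf in
lemma gCond_yInp (hS : ∀ j ∈ S, j ≠ b) (hScard : S.card = m / 2) :
    gCond n m (yInp n m ℓ b φ S) b (ℓ b, b) := by
  refine ⟨?_, rfl, ?_, ?_, ?_⟩
  · intro j
    constructor
    · intro hall
      by_contra hjb
      have := hall (ℓ j)
      rw [yInp_leaf hφleaf j hjb] at this
      simp at this
    · rintro rfl
      intro i
      by_cases hia : (i, j) = (ℓ j, j)
      · rw [hia, yInp_root]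
      · rw [yInp_other (i, j) hia
          (by rintro ⟨u, hu⟩; exact hφcol u (by rw [hu]))
          (by intro he; exact hia (Prod.ext he rfl))]
        rfl
  · intro i
    constructor
    · intro hne
      by_contra hia
      refine hne (yInp_other (i, b) hia
        (by rintro ⟨u, hu⟩; exact hφcol u (by rw [hu]))
        (by intro he; exact hia (Prod.ext he rfl)))
    · intro hia
      rw [hia, yInp_root]
      simp [PSym.one]
  · intro j hjb
    refine ⟨(ℓ j, j), follow_yInp_leaf hm hφinj hφcol j, rfl, ?_⟩
    rw [yInp_leaf hφleaf j hjb]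
  · have hset : {j : Fin m | j ≠ b ∧ ∃ ℓc : Fin n × Fin m,
        followPath (yInp n m ℓ b φ S) (ℓ b, b) (treePath m j.1) = some ℓc ∧
          (yInp n m ℓ b φ S ℓc).bp = some (ℓ b, b)} = ↑S := by
      ext j
      simp only [Set.mem_setOf_eq, Finset.coe_sort_coe, Finset.mem_coe]
      constructor
      · rintro ⟨hjb, ℓc, hfc, hbp⟩
        rw [follow_yInp_leaf hm hφinj hφcol j] at hfc
        obtain rfl : (ℓ j, j) = ℓc := Option.some.inj hfc
        rw [yInp_leaf hφleaf j hjb] at hbp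
        by_cases hjS : j ∈ S
        · exact hjS
        · simp [hjS] at hbp
      · intro hjS
        exact ⟨hS j hjS, (ℓ j, j), follow_yInp_leaf hm hφinj hφcol j,
          by rw [yInp_leaf hφleaf j (hS j hjS)]; simp [hjS]⟩
    rw [hset, Set.ncard_coe_finset, hScard]

end Construction

end Aux5

/-- Any deterministic decision tree computing `g_{n,m}`, on any input `x^ℓ`
of the hard distribution, either queries at least `m/2` cells with value 0, or queries more
than `n(m-1) - 2m` cells in total. -/
theorem statement5 (n m : ℕ) (hn : 2 ≤ n) (hm : 2 ≤ m) (hme : Even m)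
    (T : DTree (Fin n × Fin m) (PSym n m (Fin n × Fin m)))
    (hT : T.Computes (gFun n m)) (ℓ : Fin m → Fin n) :
    m / 2 ≤ ((T.queryList (xhard n m (Fin n × Fin m) ℓ)).toFinset.filter
        fun c => (xhard n m (Fin n × Fin m) ℓ c).val = false).card ∨
      (n : ℤ) * ((m : ℤ) - 1) - 2 * m <
        ((T.queryList (xhard n m (Fin n × Fin m) ℓ)).toFinset.card : ℤ) := by
  --

  classical
  by_contra hcon
  push_neg at hcon
  obtain ⟨h1, h2⟩ := hcon
  set x := xhard n m (Fin n × Fin m) ℓ with hx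
  set Q := (T.queryList x).toFinset with hQ
  have hZ : (Finset.univ.filter (fun j : Fin m => (ℓ j, j) ∈ Q)).card < m / 2 := by
    refine lt_of_le_of_lt (Finset.card_le_card_of_injOn (fun j => (ℓ j, j)) ?_ ?_) h1
    · intro j hj
      rw [Finset.mem_coe, Finset.mem_filter] at hj ⊢
      refine ⟨hj.2, ?_⟩
      rw [hx]
      simp [xhard, PSym.zero]
    · intro j1 _ j2 _ he
      exact (Prod.ext_iff.mp he).2
  have hsplit := Finset.card_filter_add_card_filter_not
    (s := (Finset.univ : Finset (Fin m))) (p := fun j : Fin m => (ℓ j, j) ∈ Q)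
  set U := Finset.univ.filter (fun j : Fin m => ¬ (ℓ j, j) ∈ Q) with hUdef
  have hucard : (Finset.univ : Finset (Fin m)).card = m := by simp
  have hUcard : m / 2 + 1 ≤ U.card := by
    rw [hucard] at hsplit
    omega
  have hUne : U.Nonempty := Finset.card_pos.mp (by omega)
  obtain ⟨b, hbU⟩ := hUne
  have hbQ : (ℓ b, b) ∉ Q := (Finset.mem_filter.mp hbU).2
  have hU'card : m / 2 ≤ (U.erase b).card := by
    rw [Finset.card_erase_of_mem hbU]
    omega
  obtain ⟨S, hSsub, hScard⟩ := Finset.exists_subset_card_eq hU'card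
  have hSb : ∀ j ∈ S, j ≠ b := fun j hj => (Finset.mem_erase.mp (hSsub hj)).1
  have hSQ : ∀ j ∈ S, (ℓ j, j) ∉ Q :=
    fun j hj => (Finset.mem_filter.mp (Finset.mem_erase.mp (hSsub hj)).2).2
  set colB := (Finset.univ : Finset (Fin n)).image (fun i => (i, b)) with hcolB
  set leafC := (Finset.univ : Finset (Fin m)).image (fun j => (ℓ j, j)) with hleafC
  set Free := (Finset.univ : Finset (Fin n × Fin m)) \ (Q ∪ colB ∪ leafC) with hFree
  have hQn : Q.card + n + 2 * m ≤ n * m := by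
    have hring : (n : ℤ) * ((m : ℤ) - 1) = n * m - n := by ring
    have h2' : (Q.card : ℤ) + n + 2 * m ≤ (n : ℤ) * m := by linarith [h2]
    exact_mod_cast h2'
  have hFreeCard : m ≤ Free.card := by
    rw [hFree, Finset.card_sdiff_of_subset (Finset.subset_univ _)]
    have hcu : (Finset.univ : Finset (Fin n × Fin m)).card = n * m := by simp
    have h3 : (Q ∪ colB ∪ leafC).card ≤ Q.card + n + m := by
      have hc1 : colB.card ≤ n := le_trans Finset.card_image_le (by simp)
      have hc2 : leafC.card ≤ m := le_trans Finset.card_image_le (by simp)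
      calc (Q ∪ colB ∪ leafC).card ≤ (Q ∪ colB).card + leafC.card :=
            Finset.card_union_le _ _
        _ ≤ Q.card + colB.card + leafC.card := by
            have := Finset.card_union_le Q colB
            omega
        _ ≤ Q.card + n + m := by omega
    omega
  have hIN : ((internalNodes m).erase ([] : List Bool)).card ≤ Free.card := by
    have hi1 := internal_card_le hm
    have hi2 := Finset.card_erase_le (s := internalNodes m) (a := ([] : List Bool))
    omega
  have e1 := ((internalNodes m).erase ([] : List Bool)).equivFin
  have e2 := Free.equivFin
  set φ : {u : List Bool // u ∈ (internalNodes m).erase ([] : List Bool)} → Fin n × Fin m :=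
    fun u => (e2.symm (Fin.castLE hIN (e1 u)) : {c // c ∈ Free}).1 with hφdef
  have hφFree : ∀ u, φ u ∈ Free := fun u => (e2.symm (Fin.castLE hIN (e1 u))).2
  have hφinj : Function.Injective φ := by
    intro u v h
    exact e1.injective (Fin.castLE_injective hIN (e2.symm.injective (Subtype.ext h)))
  have hφnotU : ∀ u, φ u ∉ Q ∪ colB ∪ leafC := by
    intro u hu
    have h5 := hφFree u
    rw [hFree, Finset.mem_sdiff] at h5
    exact h5.2 hu
  have hφnotQ : ∀ u, φ u ∉ Q := by
    intro u hu
    exact hφnotU u (Finset.mem_union_left _ (Finset.mem_union_left _ hu))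
  have hφcol : ∀ u, (φ u).2 ≠ b := by
    intro u he
    refine hφnotU u (Finset.mem_union_left _ (Finset.mem_union_right _ ?_))
    rw [hcolB, Finset.mem_image]
    exact ⟨(φ u).1, Finset.mem_univ _, by rw [← he]⟩
  have hφleaf : ∀ u (j : Fin m), φ u ≠ (ℓ j, j) := by
    intro u j he
    refine hφnotU u (Finset.mem_union_right _ ?_)
    rw [hleafC, Finset.mem_image]
    exact ⟨j, Finset.mem_univ _, he.symm⟩
  have hagree : ∀ v ∈ T.queryList x, yInp n m ℓ b φ S v = x v := by
    intro v hv
    have hvQ : v ∈ Q := by rw [hQ]; exact List.mem_toFinset.mpr hv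
    have hva : v ≠ (ℓ b, b) := by
      intro he
      rw [he] at hvQ
      exact hbQ hvQ
    have hvφ : ¬∃ u, φ u = v := by
      rintro ⟨u, rfl⟩
      exact hφnotQ u hvQ
    by_cases hvz : v.1 = ℓ v.2
    · have hv2 : v = (ℓ v.2, v.2) := Prod.ext hvz rfl
      have hjb : v.2 ≠ b := by
        intro he
        apply hva
        rw [hv2, he]
      have hjS : v.2 ∉ S := by
        intro hjS
        exact hSQ v.2 hjS (by rw [← hv2]; exact hvQ)
      rw [hv2, yInp_leaf hφleaf v.2 hjb, hx]
      simp [xhard, PSym.zero, hjS]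
    · rw [yInp_other v hva hvφ hvz, hx]
      simp [xhard, hvz]
  have heq := dtree_eval_eq_of_agree T x (yInp n m ℓ b φ S) hagree
  have hgy : gFun n m (yInp n m ℓ b φ S) = true := by
    unfold gFun
    rw [if_pos ⟨b, (ℓ b, b), gCond_yInp hm hφinj hφcol hφleaf hSb hScard⟩]
  have hgx : gFun n m x = false := by
    unfold gFun
    rw [if_neg]
    rintro ⟨b', a', hg⟩
    have h1' := (hg.1 b').mpr rfl (ℓ b')
    rw [hx] at h1'
    simp [xhard, PSym.zero, PSym.one] at h1'
  rw [hT _, hT _, hgy, hgx] at heq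
  simp at heq
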